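/- For all n ≥ 0, the sum ∑_{k=0}^{n} k!·(2n−k)!·(k+1)/((n−k)!·(n+1)!) equals ∑_{k=0}^{n} k!·∑_{(γ₀,...,γ_k): γ₀+⋯+γ_k = n−k} ∏_{i=0}^{k} C(γ_i), where C(j) is the j-th Catalan number. -/

import Mathlib

open Nat Finset PowerSeries

noncomputable def catF : PowerSeries ℚ := PowerSeries.mk fun j => (catalan j : ℚ)

lemma coeff_catF (j : ℕ) : coeff j catF = (catalan j : ℚ) := coeff_mk _ _

lemma catF_eq : catF = 1 + X * catF ^ 2 := by
  ext n
  cases n with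
  | zero => simp [coeff_catF]
  | succ n =>
    rw [map_add, coeff_succ_X_mul, coeff_catF]
    rw [show (n+1 : ℕ) = n + 1 from rfl, catalan_succ']
    simp only [pow_two, coeff_mul, coeff_catF]
    push_cast
    simp [coeff_one]

lemma cast_catalan (j : ℕ) : (catalan j : ℚ) = (2*j)! / (j ! * (j+1)!) := by
  have h := succ_mul_catalan_eq_centralBinom j
  have h2 : ((j+1) * catalan j : ℚ) = (j.centralBinom : ℚ) := by exact_mod_cast congrArg (Nat.cast : ℕ → ℚ) h
  have h3 : (j.centralBinom : ℚ) = ((2*j).choose j : ℚ) := by rw [Nat.centralBinom]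
  rw [Nat.cast_choose ℚ (by omega : j ≤ 2*j)] at h3
  have h4 : (2*j - j) = j := by omega
  rw [h4] at h3
  have hj : (j ! : ℚ) ≠ 0 := by exact_mod_cast j.factorial_ne_zero
  have hj1 : ((j+1)! : ℚ) ≠ 0 := by exact_mod_cast (j+1).factorial_ne_zero
  have hcast : ((j+1)! : ℚ) = (j+1) * j ! := by rw [Nat.factorial_succ]; push_cast; ring
  field_simp [hcast] at h2 h3 ⊢
  linear_combination h3 + (↑j ! * ↑j !) * h2 + (↑(catalan j) * ↑j !) * hcast

lemma coeff_catF_pow (m : ℕ) : ∀ k : ℕ, coeff m (catF ^ (k + 1)) =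
    ((k : ℚ) + 1) * (2 * m + k)! / (m ! * (m + k + 1)!) := by
  induction m with
  | zero =>
    intro k
    rw [coeff_zero_eq_constantCoeff, map_pow]
    have : constantCoeff catF = 1 := by
      have := coeff_catF 0
      rwa [coeff_zero_eq_constantCoeff, catalan_zero, Nat.cast_one] at this
    rw [this, one_pow]
    have hk : ((k+1)! : ℚ) = (k+1) * k ! := by rw [Nat.factorial_succ]; push_cast; ring
    simp only [Nat.mul_zero, Nat.zero_add, Nat.factorial_zero, Nat.zero_add]
    rw [hk]
    have : (k ! : ℚ) ≠ 0 := by exact_mod_cast k.factorial_ne_zero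
    field_simp
    exact Nat.cast_one
  | succ m ih =>
    intro k
    induction k with
    | zero =>
      rw [pow_one, coeff_catF, cast_catalan]
      push_cast
      ring_nf
    | succ k ihk =>
      have key : catF ^ (k + 2) = catF ^ (k + 1) + X * catF ^ (k + 3) := by
        calc catF ^ (k+2) = (1 + X * catF^2) * catF^(k+1) := by rw [← catF_eq]; ring
        _ = catF^(k+1) + X * catF^(k+3) := by ring
      rw [show k + 1 + 1 = k + 2 from rfl, key, map_add, coeff_succ_X_mul,
        ihk, show k + 3 = (k + 2) + 1 from rfl, ih (k + 2)]
      -- arithmetic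
      have e1 : (2 * (m+1) + k) = 2*m+k+2 := by omega
      have e2 : (m + 1 + k + 1) = m+k+2 := by omega
      have e3 : (2 * (m+1) + (k+1)) = 2*m+k+3 := by omega
      have e4 : (m + 1 + (k+1) + 1) = m+k+3 := by omega
      have e5 : (2*m + (k+2)) = 2*m+k+2 := by omega
      have e6 : (m + (k+2) + 1) = m+k+3 := by omega
      rw [e1, e2, e3, e4, e5, e6]
      have f1 : ((2*m+k+3)! : ℚ) = (2*m+k+3) * (2*m+k+2)! := by
        rw [show (2*m+k+3) = (2*m+k+2)+1 from rfl, Nat.factorial_succ]; push_cast; ring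
      have f2 : ((m+k+3)! : ℚ) = (m+k+3) * (m+k+2)! := by
        rw [show (m+k+3) = (m+k+2)+1 from rfl, Nat.factorial_succ]; push_cast; ring
      have f3 : ((m+1)! : ℚ) = (m+1) * m ! := by
        rw [Nat.factorial_succ]; push_cast; ring
      have h1 : ((2*m+k+2)! : ℚ) ≠ 0 := by exact_mod_cast Nat.factorial_ne_zero _
      have h2 : ((m+k+2)! : ℚ) ≠ 0 := by exact_mod_cast Nat.factorial_ne_zero _
      have h3 : (m ! : ℚ) ≠ 0 := by exact_mod_cast Nat.factorial_ne_zero _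
      rw [f1, f2, f3]
      push_cast
      field_simp
      ring
lemma tuple_sum_eq_coeff (k m : ℕ) :
    ∑ γ ∈ Finset.Nat.antidiagonalTuple (k + 1) m, ∏ i, (catalan (γ i) : ℚ) =
      coeff m (catF ^ (k + 1)) := by
  rw [coeff_pow]
  apply Finset.sum_nbij'
    (i := fun γ => Finsupp.onFinset (range (k+1))
      (fun j => if h : j < k + 1 then γ ⟨j, h⟩ else 0)
      (by intro j hj; rw [mem_range]; by_contra h; simp [h] at hj))
    (j := fun l => fun i : Fin (k+1) => l i)
  · intro γ hγ
    rw [Finset.mem_finsuppAntidiag]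
    rw [Finset.Nat.mem_antidiagonalTuple] at hγ
    constructor
    · rw [Finset.sum_congr rfl (fun j hj => ?_) , ← hγ, ← Fin.sum_univ_eq_sum_range (fun j => if h : j < k+1 then γ ⟨j,h⟩ else 0)]
      · apply Finset.sum_congr rfl; intro i _; simp [i.isLt]
      · rfl
    · exact Finsupp.support_onFinset_subset
  · intro l hl
    rw [Finset.mem_finsuppAntidiag] at hl
    rw [Finset.Nat.mem_antidiagonalTuple]
    rw [← hl.1, Fin.sum_univ_eq_sum_range (fun j => l j)]
  · intro γ hγ; funext i; simp [i.isLt, Fin.is_le i, Nat.not_lt.2 (Fin.is_le i)]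
  · intro l hl
    rw [Finset.mem_finsuppAntidiag] at hl
    ext j
    simp only [Finsupp.onFinset_apply]
    by_cases h : j < k + 1
    · simp [h]
    · simp only [h, dif_neg, not_false_iff]
      by_contra hne
      have : j ∈ l.support := Finsupp.mem_support_iff.2 (fun he => hne he.symm)
      have := hl.2 this
      rw [mem_range] at this; omega
  · intro γ hγ
    rw [← Fin.prod_univ_eq_prod_range (fun j => coeff ((Finsupp.onFinset (range (k+1)) (fun j => if h : j < k + 1 then γ ⟨j, h⟩ else 0) (by intro j hj; rw [mem_range]; by_contra h; simp [h] at hj)) j) catF)]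
    apply Finset.prod_congr rfl
    intro i _
    simp [coeff_catF, i.isLt, Fin.is_le i]

theorem pterahedron_vertex_count_formulas (n : ℕ) :
    ∑ k ∈ range (n + 1),
        (k ! : ℚ) * (2 * n - k)! * (k + 1) / ((n - k)! * (n + 1)!) =
      ∑ k ∈ range (n + 1),
        (k ! : ℚ) *
          ∑ γ ∈ Finset.Nat.antidiagonalTuple (k + 1) (n - k),
            ∏ i, (catalan (γ i) : ℚ) := by
  apply Finset.sum_congr rfl
  intro k hk
  rw [mem_range] at hk
  rw [tuple_sum_eq_coeff, coeff_catF_pow]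
  have e1 : 2 * n - k = 2 * (n - k) + k := by omega
  have e2 : n + 1 = (n - k) + k + 1 := by omega
  rw [e1, e2]
  have h1 : (((n-k)+k+1)! : ℚ) ≠ 0 := by exact_mod_cast Nat.factorial_ne_zero _
  have h2 : (((n-k))! : ℚ) ≠ 0 := by exact_mod_cast Nat.factorial_ne_zero _
  field_simp
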